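/- There exists a graph G with χ(G) = 5, Ore-degree θ(G) = 9 (so χ(G) = ⌊θ(G)/2⌋ + 1 = 5), containing no K_5. (Hence the bound χ(G) ≥ 6 in 'if 6 ≤ χ(G) = ⌊θ(G)/2⌋ + 1 then K_{χ(G)} ⊆ G' is sharp.) -/

import Mathlib

set_option maxRecDepth 10000

open SimpleGraph

def myEdges : List (Fin 9 × Fin 9) :=
  [(0,1),(0,2),(0,3),(1,2),(1,3),(2,3),(4,5),(4,6),(4,7),(5,6),(5,7),(6,7),
   (0,4),(0,5),(1,8),(2,8),(3,8),(6,8),(7,8)]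

def myG : SimpleGraph (Fin 9) := SimpleGraph.fromRel (fun x y => (x,y) ∈ myEdges)

instance : DecidableRel myG.Adj := fun x y =>
  inferInstanceAs (Decidable (x ≠ y ∧ ((x,y) ∈ myEdges ∨ (y,x) ∈ myEdges)))

lemma cover4 : ∀ a b c d x : Fin 4, a ≠ b → a ≠ c → a ≠ d → b ≠ c → b ≠ d → c ≠ d →
    x = a ∨ x = b ∨ x = c ∨ x = d := by decide

lemma myG_not_col4 : ¬ myG.Colorable 4 := by
  rintro ⟨C⟩
  have h01 : C 0 ≠ C 1 := C.valid (by decide)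
  have h02 : C 0 ≠ C 2 := C.valid (by decide)
  have h03 : C 0 ≠ C 3 := C.valid (by decide)
  have h12 : C 1 ≠ C 2 := C.valid (by decide)
  have h13 : C 1 ≠ C 3 := C.valid (by decide)
  have h23 : C 2 ≠ C 3 := C.valid (by decide)
  have h45 : C 4 ≠ C 5 := C.valid (by decide)
  have h46 : C 4 ≠ C 6 := C.valid (by decide)
  have h47 : C 4 ≠ C 7 := C.valid (by decide)
  have h56 : C 5 ≠ C 6 := C.valid (by decide)
  have h57 : C 5 ≠ C 7 := C.valid (by decide)
  have h67 : C 6 ≠ C 7 := C.valid (by decide)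
  have h04 : C 0 ≠ C 4 := C.valid (by decide)
  have h05 : C 0 ≠ C 5 := C.valid (by decide)
  have h18 : C 1 ≠ C 8 := C.valid (by decide)
  have h28 : C 2 ≠ C 8 := C.valid (by decide)
  have h38 : C 3 ≠ C 8 := C.valid (by decide)
  have h68 : C 6 ≠ C 8 := C.valid (by decide)
  have h78 : C 7 ≠ C 8 := C.valid (by decide)
  have hA := cover4 (C 0) (C 1) (C 2) (C 3) (C 8) h01 h02 h03 h12 h13 h23
  have hB := cover4 (C 4) (C 5) (C 6) (C 7) (C 8) h45 h46 h47 h56 h57 h67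
  have h80 : C 8 = C 0 := by
    rcases hA with h | h | h | h
    · exact h
    · exact absurd h.symm h18
    · exact absurd h.symm h28
    · exact absurd h.symm h38
  rcases hB with h | h | h | h
  · exact h04 (h80.symm.trans h)
  · exact h05 (h80.symm.trans h)
  · exact h68 h.symm
  · exact h78 h.symm

lemma myG_col5 : myG.Colorable 5 := by
  have aux : ∀ v w, myG.Adj v w → (![0,1,2,3,1,2,0,3,4] : Fin 9 → Fin 5) v ≠
      (![0,1,2,3,1,2,0,3,4] : Fin 9 → Fin 5) w := by decide
  exact ⟨SimpleGraph.Coloring.mk _ (fun {v w} h => aux v w h)⟩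

/-- There is a graph `G` with `χ(G) = 5`, Ore-degree `θ(G) = 9`
(so `χ(G) = ⌊θ(G)/2⌋ + 1`), containing no `K_5`: the bound `χ(G) ≥ 6`
in Corollary O is sharp. -/
theorem stmt_13 :
    ∃ (G : SimpleGraph (Fin 9)),
      G.chromaticNumber = 5 ∧
      (∀ x y : Fin 9, G.Adj x y →
        (G.neighborSet x).ncard + (G.neighborSet y).ncard ≤ 9) ∧
      (∃ x y : Fin 9, G.Adj x y ∧
        (G.neighborSet x).ncard + (G.neighborSet y).ncard = 9) ∧
      ¬ ∃ s : Finset (Fin 9), G.IsNClique 5 s := by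
  refine ⟨myG, ?_, ?_, ?_, ?_⟩
  · refine le_antisymm ?_ ?_
    · exact_mod_cast myG_col5.chromaticNumber_le
    · have h4 : ¬ myG.chromaticNumber ≤ (4 : ℕ) :=
        fun h => myG_not_col4 (chromaticNumber_le_iff_colorable.mp h)
      have hlt : (4 : ℕ) < myG.chromaticNumber := not_le.mp h4
      have := Order.add_one_le_of_lt hlt
      exact le_trans (le_of_eq (by norm_num)) this
  · have hd : ∀ v : Fin 9, (myG.neighborSet v).ncard = myG.degree v := fun v => by
      rw [Set.ncard_eq_toFinset_card']
      simp [SimpleGraph.neighborFinset_def, SimpleGraph.degree]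
    intro x y h
    rw [hd, hd]
    revert h; revert x y
    decide
  · have hd : ∀ v : Fin 9, (myG.neighborSet v).ncard = myG.degree v := fun v => by
      rw [Set.ncard_eq_toFinset_card']
      simp [SimpleGraph.neighborFinset_def, SimpleGraph.degree]
    refine ⟨0, 1, by decide, ?_⟩
    rw [hd, hd]
    decide
  · decide
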